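/- Let M ∈ ℝ^{n×n} be Hurwitz, C ∈ ℝ^{p×n}, and V ∈ ℝ^{n×n} symmetric positive definite. Let S ∈ ℝ^{p̂×p} (p̂ ≤ p) be a row-selection matrix, i.e., every row of S is a standard basis vector of ℝ^p and the rows of S are pairwise distinct, and set Ĉ := S·C. Let W_C and W_Ĉ be the solutions of MᵀW_C + W_C M + CᵀC = 0 and MᵀW_Ĉ + W_Ĉ M + ĈᵀĈ = 0. Then W_Ĉ ⪯ W_C, hence tr(W_Ĉ V) ≤ tr(W_C V); moreover, if W_Ĉ is positive definite, then so is W_C and tr(W_Ĉ⁻¹ V⁻¹) ≥ tr(W_C⁻¹ V⁻¹). -/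

import Mathlib

open Matrix MeasureTheory

/-- Spectral (ℓ² operator) norm of a real matrix. -/
noncomputable def specNorm {p q : Type*} [Fintype p] [Fintype q] [DecidableEq q]
    (M : Matrix p q ℝ) : ℝ :=
  ‖LinearMap.toContinuousLinearMap (Matrix.toEuclideanLin M)‖

/-- A real square matrix is Hurwitz if all of its eigenvalues over ℂ have negative real part. -/
def IsHurwitz {k : Type*} [Fintype k] [DecidableEq k] (M : Matrix k k ℝ) : Prop :=
  ∀ μ ∈ spectrum ℂ (M.map (Complex.ofReal ·)), μ.re < 0

/-- Smallest (real) eigenvalue of a real matrix. -/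
noncomputable def lamMin {k : Type*} [Fintype k] [DecidableEq k] (X : Matrix k k ℝ) : ℝ :=
  sInf (spectrum ℝ X)

/-- Largest (real) eigenvalue of a real matrix. -/
noncomputable def lamMax {k : Type*} [Fintype k] [DecidableEq k] (X : Matrix k k ℝ) : ℝ :=
  sSup (spectrum ℝ X)


open NormedSpace Filter Polynomial
open scoped Topology NNReal ENNReal
attribute [local instance] Matrix.linftyOpNormedRing Matrix.linftyOpNormedAlgebra

variable {n : ℕ}

lemma eig_exists {A : Matrix (Fin n) (Fin n) ℂ} {μ : ℂ} (hμ : μ ∈ spectrum ℂ A) :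
    ∃ v : Fin n → ℂ, v ≠ 0 ∧ A *ᵥ v = μ • v := by
  rw [spectrum.mem_iff] at hμ
  rw [Matrix.isUnit_iff_isUnit_det, isUnit_iff_ne_zero, not_not] at hμ
  obtain ⟨v, hv0, hv⟩ := (Matrix.exists_mulVec_eq_zero_iff).2 hμ
  refine ⟨v, hv0, ?_⟩
  have : (algebraMap ℂ (Matrix (Fin n) (Fin n) ℂ) μ - A) *ᵥ v = 0 := hv
  rw [sub_mulVec] at this
  have h2 : algebraMap ℂ (Matrix (Fin n) (Fin n) ℂ) μ *ᵥ v = μ • v := by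
    ext i
    simp [Matrix.algebraMap_eq_diagonal, mulVec_diagonal, Pi.algebraMap_apply, Algebra.algebraMap_self]
  rw [h2] at this
  exact (sub_eq_zero.mp this).symm

lemma pow_eig {A : Matrix (Fin n) (Fin n) ℂ} {μ : ℂ} {v : Fin n → ℂ} (hv : A *ᵥ v = μ • v)
    (k : ℕ) : (A ^ k) *ᵥ v = (μ ^ k) • v := by
  induction k with
  | zero => simp
  | succ k ih =>
      rw [pow_succ, ← mulVec_mulVec, hv, mulVec_smul, ih, smul_smul, pow_succ]
      ring_nf

/-- mulVec as a continuous linear map in the matrix argument -/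
noncomputable def mulVecCLM (v : Fin n → ℂ) : Matrix (Fin n) (Fin n) ℂ →L[ℂ] (Fin n → ℂ) :=
  LinearMap.toContinuousLinearMap
    { toFun := fun B => B *ᵥ v
      map_add' := fun B C => add_mulVec B C v
      map_smul' := fun c B => smul_mulVec c B v }

lemma exp_eig {A : Matrix (Fin n) (Fin n) ℂ} {μ : ℂ} {v : Fin n → ℂ} (hv : A *ᵥ v = μ • v) :
    (exp A) *ᵥ v = Complex.exp μ • v := by
  have hsum : Summable fun k : ℕ => (k.factorial : ℂ)⁻¹ • A ^ k := expSeries_summable' A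
  have h1 : (exp A) *ᵥ v = mulVecCLM v (exp A) := rfl
  rw [h1, exp_eq_tsum ℂ, (mulVecCLM v).map_tsum hsum]
  have h2 : ∀ k : ℕ, mulVecCLM v ((k.factorial : ℂ)⁻¹ • A ^ k) = ((k.factorial : ℂ)⁻¹ * μ ^ k) • v := by
    intro k
    rw [_root_.map_smul]
    show (k.factorial : ℂ)⁻¹ • ((A ^ k) *ᵥ v) = _
    rw [pow_eig hv k, smul_smul]
  simp_rw [h2]
  rw [Summable.tsum_smul_const]
  · congr 1
    rw [Complex.exp_eq_exp_ℂ, exp_eq_tsum ℂ]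
    simp_rw [smul_eq_mul]
  · simpa using (expSeries_summable' (𝕂 := ℂ) μ)

lemma exp_mem_span (A : Matrix (Fin n) (Fin n) ℂ) :
    exp A ∈ Submodule.span ℂ (Set.range fun k : ℕ => A ^ k) := by
  set S := Submodule.span ℂ (Set.range fun k : ℕ => A ^ k)
  have hclosed : IsClosed (S : Set (Matrix (Fin n) (Fin n) ℂ)) :=
    Submodule.closed_of_finiteDimensional S
  have hsum : HasSum (fun k : ℕ => (k.factorial : ℂ)⁻¹ • A ^ k) (exp A) := by
    rw [exp_eq_tsum ℂ]
    exact (expSeries_summable' A).hasSum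
  refine hclosed.mem_of_tendsto hsum (Filter.Eventually.of_forall fun s => ?_)
  exact Submodule.sum_mem S fun k _ =>
    Submodule.smul_mem S _ (Submodule.subset_span ⟨k, rfl⟩)

lemma exists_poly_exp (A : Matrix (Fin n) (Fin n) ℂ) :
    ∃ q : ℂ[X], Polynomial.aeval A q = exp A := by
  obtain ⟨c, hc⟩ := (Finsupp.mem_span_range_iff_exists_finsupp).1 (exp_mem_span A)
  refine ⟨c.sum fun k a => Polynomial.C a * Polynomial.X ^ k, ?_⟩
  rw [map_finsuppSum]
  rw [← hc]
  refine Finsupp.sum_congr fun k _ => ?_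
  simp [Algebra.smul_def]

lemma aeval_eig {A : Matrix (Fin n) (Fin n) ℂ} {μ : ℂ} {v : Fin n → ℂ} (hv : A *ᵥ v = μ • v)
    (q : ℂ[X]) : (Polynomial.aeval A q) *ᵥ v = (q.eval μ) • v := by
  induction q using Polynomial.induction_on' with
  | add p r hp hr => rw [map_add, add_mulVec, hp, hr, Polynomial.eval_add, add_smul]
  | monomial k a =>
      rw [Polynomial.aeval_monomial, Polynomial.eval_monomial]
      rw [Algebra.algebraMap_eq_smul_one, smul_mul_assoc, one_mul, smul_mulVec,
        pow_eig hv k, smul_smul]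

lemma spectrum_exp (hn : 0 < n) (A : Matrix (Fin n) (Fin n) ℂ) :
    spectrum ℂ (exp A) = Complex.exp '' spectrum ℂ A := by
  have : Nonempty (Fin n) := Fin.pos_iff_nonempty.mp hn
  obtain ⟨q, hq⟩ := exists_poly_exp A
  rw [← hq, spectrum.map_polynomial_aeval_of_nonempty A q (spectrum.nonempty A)]
  refine Set.image_congr fun μ hμ => ?_
  obtain ⟨v, hv0, hv⟩ := eig_exists hμ
  have h1 : (Polynomial.aeval A q) *ᵥ v = (q.eval μ) • v := aeval_eig hv q
  have h2 : (Polynomial.aeval A q) *ᵥ v = Complex.exp μ • v := by rw [hq]; exact exp_eig hv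
  obtain ⟨i, hi⟩ : ∃ i, v i ≠ 0 := by
    by_contra h; push_neg at h; exact hv0 (funext fun i => h i)
  have := congr_fun (h1.symm.trans h2) i
  simp only [Pi.smul_apply, smul_eq_mul] at this
  exact mul_right_cancel₀ hi this


lemma pow_norm_tendsto_zero {B : Matrix (Fin n) (Fin n) ℂ} (hB : spectralRadius ℂ B < 1) :
    Tendsto (fun k : ℕ => ‖B ^ k‖) atTop (𝓝 0) := by
  obtain ⟨r, hr1, hr2⟩ := exists_between hB
  have hrtop : r ≠ ⊤ := ne_top_of_lt hr2
  set r' : ℝ≥0 := r.toNNReal with hr'def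
  have hrr : (r' : ℝ≥0∞) = r := ENNReal.coe_toNNReal hrtop
  have hgel := spectrum.pow_nnnorm_pow_one_div_tendsto_nhds_spectralRadius B
  have hev : ∀ᶠ k : ℕ in atTop, (‖B ^ k‖₊ : ℝ≥0∞) ^ (1 / (k:ℝ)) < r :=
    hgel.eventually_lt_const hr1
  have h1 : ∀ᶠ k : ℕ in atTop, ‖B ^ k‖ ≤ (r' : ℝ) ^ k := by
    filter_upwards [hev, eventually_ge_atTop 1] with k hk hk1
    have hk0 : (1 / (k:ℝ)) * (k:ℝ) = 1 := by
      field_simp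
    have hle := ENNReal.rpow_le_rpow hk.le (by positivity : (0:ℝ) ≤ (k:ℝ))
    rw [← ENNReal.rpow_mul, hk0, ENNReal.rpow_one] at hle
    rw [← hrr, ENNReal.rpow_natCast, ← ENNReal.coe_pow, ENNReal.coe_le_coe] at hle
    have : ‖B ^ k‖₊ ≤ r' ^ k := hle
    calc ‖B ^ k‖ = ((‖B ^ k‖₊ : ℝ)) := rfl
    _ ≤ ((r' ^ k : ℝ≥0) : ℝ) := by exact_mod_cast this
    _ = (r' : ℝ) ^ k := by push_cast; ring
  have hr'1 : (r' : ℝ) < 1 := by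
    have : (r' : ℝ≥0∞) < 1 := by rw [hrr]; exact hr2
    exact_mod_cast this
  have h2 : Tendsto (fun k : ℕ => (r' : ℝ) ^ k) atTop (𝓝 0) :=
    tendsto_pow_atTop_nhds_zero_of_lt_one r'.coe_nonneg hr'1
  exact squeeze_zero' (Eventually.of_forall fun k => norm_nonneg _) h1 h2

lemma entry_norm_le_linfty (B : Matrix (Fin n) (Fin n) ℂ) (i j : Fin n) : ‖B i j‖ ≤ ‖B‖ := by
  rw [Matrix.linfty_opNorm_def]
  have h1 : ‖B i j‖₊ ≤ Finset.univ.sup fun i => ∑ j, ‖B i j‖₊ :=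
    le_trans (Finset.single_le_sum (f := fun j => ‖B i j‖₊) (fun _ _ => zero_le)
      (Finset.mem_univ j)) (Finset.le_sup (f := fun i => ∑ j, ‖B i j‖₊) (Finset.mem_univ i))
  exact_mod_cast h1

lemma hurwitz_spectralRadius (hn : 0 < n) {M : Matrix (Fin n) (Fin n) ℝ}
    (hM : IsHurwitz M) :
    spectralRadius ℂ (exp (M.map (Complex.ofReal ·))) < 1 := by
  have : Nonempty (Fin n) := Fin.pos_iff_nonempty.mp hn
  have key : ∀ z ∈ spectrum ℂ (exp (M.map (Complex.ofReal ·))), ‖z‖₊ < 1 := by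
    intro z hz
    rw [spectrum_exp hn] at hz
    obtain ⟨μ, hμ, rfl⟩ := hz
    have h1 : μ.re < 0 := hM μ hμ
    have habs : ‖Complex.exp μ‖ = Real.exp μ.re := Complex.norm_exp μ
    have : ‖Complex.exp μ‖ < 1 := by
      rw [habs]
      exact Real.exp_lt_one_iff.mpr h1
    exact_mod_cast this
  have := spectrum.spectralRadius_lt_of_forall_lt (a := exp (M.map (Complex.ofReal ·)))
    (r := 1) key
  simpa using this

lemma exp_real_map (M : Matrix (Fin n) (Fin n) ℝ) (t : ℝ) :
    (exp (t • M)).map (Complex.ofReal ·) = exp (t • M.map (Complex.ofReal ·)) := by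
  let L : Matrix (Fin n) (Fin n) ℝ →ₗ[ℝ] Matrix (Fin n) (Fin n) ℂ :=
    { toFun := fun B => B.map (Complex.ofReal ·)
      map_add' := fun B C => by ext i j; simp
      map_smul' := fun c B => by ext i j; simp [Matrix.map_apply, Complex.real_smul] }
  have hcont : Continuous (Complex.ofRealHom.mapMatrix :
      Matrix (Fin n) (Fin n) ℝ →+* Matrix (Fin n) (Fin n) ℂ) :=
    L.continuous_of_finiteDimensional
  have h1 := map_exp (Complex.ofRealHom.mapMatrix :
      Matrix (Fin n) (Fin n) ℝ →+* Matrix (Fin n) (Fin n) ℂ) hcont (t • M)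
  have h2 : (Complex.ofRealHom.mapMatrix (t • M) : Matrix (Fin n) (Fin n) ℂ)
      = t • M.map (Complex.ofReal ·) := by
    ext i j
    simp [Complex.real_smul]
  have h3 : (exp (t • M.map (Complex.ofReal ·)) : Matrix (Fin n) (Fin n) ℂ)
      = exp (t • M.map (Complex.ofReal ·)) :=
    rfl
  calc (exp (t • M)).map (Complex.ofReal ·)
      = Complex.ofRealHom.mapMatrix (exp (t • M)) := rfl
    _ = exp (Complex.ofRealHom.mapMatrix (t • M)) := h1
    _ = exp (t • M.map (Complex.ofReal ·)) := by rw [h2, h3]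

lemma exp_norm_tendsto (hn : 0 < n) {M : Matrix (Fin n) (Fin n) ℝ} (hM : IsHurwitz M) :
    Tendsto (fun t : ℝ => ‖exp (t • M.map (Complex.ofReal ·))‖) atTop (𝓝 0) := by
  set A := M.map (Complex.ofReal ·) with hA
  have hpow := pow_norm_tendsto_zero (hurwitz_spectralRadius hn hM)
  -- bound on the unit interval
  have hcontexp : Continuous fun s : ℝ => exp (s • A) :=
    exp_continuous.comp (by continuity)
  obtain ⟨Cb, hCb⟩ := (isCompact_Icc (a := (0:ℝ)) (b := 1)).exists_bound_of_continuousOn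
    hcontexp.continuousOn
  have hCb0 : 0 ≤ Cb := le_trans (norm_nonneg _) (hCb 0 (by norm_num))
  have hsplit : ∀ t : ℝ, 0 ≤ t →
      ‖exp (t • A)‖ ≤ Cb * ‖(exp A) ^ ⌊t⌋₊‖ := by
    intro t ht
    set k := ⌊t⌋₊
    set s := t - (k : ℝ) with hs
    have hs0 : 0 ≤ s := sub_nonneg.mpr (Nat.floor_le ht)
    have hs1 : s ≤ 1 := by
      have := Nat.lt_floor_add_one t
      simp only [hs]
      linarith
    have hsum : t • A = s • A + (k : ℝ) • A := by
      rw [← add_smul]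
      congr 1
      simp [hs]
    have hcomm : Commute (s • A) ((k : ℝ) • A) :=
      ((Commute.refl A).smul_left s).smul_right _
    have hmul : exp (t • A) = exp (s • A) * exp ((k : ℝ) • A) := by
      rw [hsum]; exact exp_add_of_commute hcomm
    have hk : exp ((k : ℝ) • A) = (exp A) ^ k := by
      rw [Nat.cast_smul_eq_nsmul, Matrix.exp_nsmul]
    rw [hmul, hk]
    calc ‖exp (s • A) * (exp A) ^ k‖ ≤ ‖exp (s • A)‖ * ‖(exp A) ^ k‖ :=
          norm_mul_le _ _
      _ ≤ Cb * ‖(exp A) ^ k‖ := by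
          apply mul_le_mul_of_nonneg_right _ (norm_nonneg _)
          exact hCb s ⟨hs0, hs1⟩
  have hg : Tendsto (fun t : ℝ => Cb * ‖(exp A) ^ ⌊t⌋₊‖) atTop (𝓝 0) := by
    have h1 : Tendsto (fun t : ℝ => ‖(exp A) ^ ⌊t⌋₊‖) atTop (𝓝 0) :=
      hpow.comp tendsto_nat_floor_atTop
    simpa using h1.const_mul Cb
  apply squeeze_zero' (f := fun t => ‖exp (t • A)‖)
    (Eventually.of_forall fun t => norm_nonneg _) _ hg
  filter_upwards [eventually_ge_atTop (0:ℝ)] with t ht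
  exact hsplit t ht

lemma exp_entry_tendsto (hn : 0 < n) {M : Matrix (Fin n) (Fin n) ℝ} (hM : IsHurwitz M)
    (i j : Fin n) :
    Tendsto (fun t : ℝ => exp (t • M) i j) atTop (𝓝 0) := by
  apply squeeze_zero_norm' _ (exp_norm_tendsto hn hM)
  filter_upwards with t
  have h1 : exp (t • M) i j = ((exp (t • M)).map (Complex.ofReal ·) i j).re := rfl
  rw [h1, exp_real_map]
  calc |(exp (t • M.map (Complex.ofReal ·)) i j).re|
      ≤ ‖exp (t • M.map (Complex.ofReal ·)) i j‖ := Complex.abs_re_le_norm _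
    _ ≤ ‖exp (t • M.map (Complex.ofReal ·))‖ := entry_norm_le_linfty _ i j

lemma hurwitz_transpose {M : Matrix (Fin n) (Fin n) ℝ} (hM : IsHurwitz M) : IsHurwitz Mᵀ := by
  intro μ hμ
  apply hM μ
  rw [spectrum.mem_iff] at hμ ⊢
  intro hcon
  apply hμ
  have h1 : Mᵀ.map (Complex.ofReal ·) = (M.map (Complex.ofReal ·))ᵀ := rfl
  rw [h1]
  rw [Matrix.isUnit_iff_isUnit_det] at hcon ⊢
  have h2 : (algebraMap ℂ (Matrix (Fin n) (Fin n) ℂ) μ - (M.map (Complex.ofReal ·))ᵀ)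
      = (algebraMap ℂ (Matrix (Fin n) (Fin n) ℂ) μ - M.map (Complex.ofReal ·))ᵀ := by
    rw [transpose_sub]
    congr 1
    rw [Matrix.algebraMap_eq_diagonal, diagonal_transpose]
  rw [h2, Matrix.det_transpose]
  exact hcon

noncomputable def quadCLM (x y : Fin n → ℝ) : Matrix (Fin n) (Fin n) ℝ →L[ℝ] ℝ :=
  LinearMap.toContinuousLinearMap
    { toFun := fun B => x ⬝ᵥ (B *ᵥ y)
      map_add' := fun B C => by show x ⬝ᵥ ((B + C) *ᵥ y) = _; rw [add_mulVec, dotProduct_add]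
      map_smul' := fun c B => by
        show x ⬝ᵥ ((c • B) *ᵥ y) = c • (x ⬝ᵥ (B *ᵥ y))
        rw [smul_mulVec, dotProduct_smul] }

lemma F_hasDerivAt (M D : Matrix (Fin n) (Fin n) ℝ) (t : ℝ) :
    HasDerivAt (fun t : ℝ => exp (t • Mᵀ) * D * exp (t • M))
      (exp (t • Mᵀ) * (Mᵀ * D + D * M) * exp (t • M)) t := by
  have h1 : HasDerivAt (fun t : ℝ => exp (t • Mᵀ)) (exp (t • Mᵀ) * Mᵀ) t :=
    hasDerivAt_exp_smul_const _ t
  have h2 : HasDerivAt (fun t : ℝ => exp (t • M)) (exp (t • M) * M) t :=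
    hasDerivAt_exp_smul_const _ t
  have h3 := (h1.mul_const D).mul h2
  refine h3.congr_deriv ?_
  have hc : Commute M (exp (t • M)) := ((Commute.refl M).smul_right t).exp_right
  rw [← hc.eq]
  noncomm_ring

lemma f_hasDerivAt (M D : Matrix (Fin n) (Fin n) ℝ) (x y : Fin n → ℝ) (t : ℝ) :
    HasDerivAt (fun t : ℝ => x ⬝ᵥ ((exp (t • Mᵀ) * D * exp (t • M)) *ᵥ y))
      (x ⬝ᵥ ((exp (t • Mᵀ) * (Mᵀ * D + D * M) * exp (t • M)) *ᵥ y)) t :=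
  (quadCLM x y).hasFDerivAt.comp_hasDerivAt t (F_hasDerivAt M D t)

lemma f_tendsto (hn : 0 < n) {M : Matrix (Fin n) (Fin n) ℝ} (hM : IsHurwitz M)
    (D : Matrix (Fin n) (Fin n) ℝ) (x y : Fin n → ℝ) :
    Tendsto (fun t : ℝ => x ⬝ᵥ ((exp (t • Mᵀ) * D * exp (t • M)) *ᵥ y)) atTop (𝓝 0) := by
  have hG : ∀ i a, Tendsto (fun t : ℝ => exp (t • Mᵀ) i a) atTop (𝓝 0) :=
    fun i a => exp_entry_tendsto hn (hurwitz_transpose hM) i a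
  have hH : ∀ c j, Tendsto (fun t : ℝ => exp (t • M) c j) atTop (𝓝 0) :=
    fun c j => exp_entry_tendsto hn hM c j
  have hentry : ∀ i j, Tendsto (fun t : ℝ =>
      (exp (t • Mᵀ) * D * exp (t • M)) i j) atTop (𝓝 0) := by
    intro i j
    have heq : (fun t : ℝ => (exp (t • Mᵀ) * D * exp (t • M)) i j)
        = fun t : ℝ => ∑ c, (∑ a, exp (t • Mᵀ) i a * D a c) * exp (t • M) c j := by
      funext t
      simp [Matrix.mul_apply]
    rw [heq]
    have := tendsto_finset_sum (Finset.univ : Finset (Fin n)) (fun c _ =>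
      ((tendsto_finset_sum (Finset.univ : Finset (Fin n)) (fun a _ =>
        (hG i a).mul_const (D a c))).mul (hH c j)))
    simpa using this
  have heq2 : (fun t : ℝ => x ⬝ᵥ ((exp (t • Mᵀ) * D * exp (t • M)) *ᵥ y))
      = fun t : ℝ => ∑ i, x i * ∑ j, (exp (t • Mᵀ) * D * exp (t • M)) i j * y j := by
    funext t
    simp [dotProduct, mulVec]
  rw [heq2]
  have := tendsto_finset_sum (Finset.univ : Finset (Fin n)) (fun i _ =>
    (tendsto_finset_sum (Finset.univ : Finset (Fin n)) (fun j _ =>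
      (hentry i j).mul_const (y j))).const_mul (x i))
  simpa using this

lemma lyap_nonneg (hn : 0 < n) {M D Q : Matrix (Fin n) (Fin n) ℝ} (hM : IsHurwitz M)
    (hQ : ∀ z, 0 ≤ z ⬝ᵥ (Q *ᵥ z)) (heq : Mᵀ * D + D * M = -Q) (x : Fin n → ℝ) :
    0 ≤ x ⬝ᵥ (D *ᵥ x) := by
  set f := fun t : ℝ => x ⬝ᵥ ((exp (t • Mᵀ) * D * exp (t • M)) *ᵥ x) with hf
  have hder : ∀ t, HasDerivAt f (x ⬝ᵥ ((exp (t • Mᵀ) * (-Q) * exp (t • M)) *ᵥ x)) t := by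
    intro t
    have := f_hasDerivAt M D x x t
    rwa [heq] at this
  have hderiv_nonpos : ∀ t, deriv f t ≤ 0 := by
    intro t
    rw [(hder t).deriv]
    set G := exp (t • M) with hGdef
    have hG : exp (t • Mᵀ) = Gᵀ := by rw [hGdef, ← Matrix.exp_transpose, transpose_smul]
    rw [hG]
    have key : x ⬝ᵥ ((Gᵀ * (-Q) * G) *ᵥ x) = -((G *ᵥ x) ⬝ᵥ (Q *ᵥ (G *ᵥ x))) := by
      rw [← mulVec_mulVec, ← mulVec_mulVec, Matrix.dotProduct_mulVec, vecMul_transpose,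
        neg_mulVec, dotProduct_neg]
    rw [key, neg_nonpos]
    exact hQ _
  have hdiff : Differentiable ℝ f := fun t => (hder t).differentiableAt
  have hanti : Antitone f := antitone_of_deriv_nonpos hdiff hderiv_nonpos
  have hlim : Tendsto f atTop (𝓝 0) := f_tendsto hn hM D x x
  have h0 : (0:ℝ) ≤ f 0 := by
    refine le_of_tendsto hlim ?_
    filter_upwards [eventually_ge_atTop (0:ℝ)] with t ht
    exact hanti ht
  have hf0 : f 0 = x ⬝ᵥ (D *ᵥ x) := by
    simp [hf, exp_zero]
  rwa [hf0] at h0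

lemma lyap_unique (hn : 0 < n) {M E : Matrix (Fin n) (Fin n) ℝ} (hM : IsHurwitz M)
    (heq : Mᵀ * E + E * M = 0) : E = 0 := by
  have key : ∀ x y : Fin n → ℝ, x ⬝ᵥ (E *ᵥ y) = 0 := by
    intro x y
    set f := fun t : ℝ => x ⬝ᵥ ((exp (t • Mᵀ) * E * exp (t • M)) *ᵥ y) with hf
    have hder : ∀ t, HasDerivAt f 0 t := by
      intro t
      have := f_hasDerivAt M E x y t
      rw [heq] at this
      simpa using this
    have hconst : ∀ t s : ℝ, f t = f s :=
      is_const_of_deriv_eq_zero (fun t => (hder t).differentiableAt)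
        (fun t => (hder t).deriv)
    have hlim : Tendsto f atTop (𝓝 0) := f_tendsto hn hM E x y
    have hcc : Tendsto f atTop (𝓝 (f 0)) := by
      have : f = fun _ => f 0 := funext fun t => hconst t 0
      rw [this]
      exact tendsto_const_nhds
    have hf00 : f 0 = 0 := tendsto_nhds_unique hcc hlim
    have : f 0 = x ⬝ᵥ (E *ᵥ y) := by simp [hf, exp_zero]
    rw [← this, hf00]
  ext i j
  have := key (Pi.single i 1) (Pi.single j 1)
  simpa [dotProduct, mulVec, Pi.single_apply, Finset.sum_ite_eq] using this

lemma psd_of_form {A : Matrix (Fin n) (Fin n) ℝ} (hherm : A.IsHermitian)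
    (h : ∀ x : Fin n → ℝ, 0 ≤ x ⬝ᵥ (A *ᵥ x)) : A.PosSemidef :=
  .of_dotProduct_mulVec_nonneg hherm fun x => by simpa using h x

lemma form_of_psd {A : Matrix (Fin n) (Fin n) ℝ} (hA : A.PosSemidef) (x : Fin n → ℝ) :
    0 ≤ x ⬝ᵥ (A *ᵥ x) := by simpa using hA.dotProduct_mulVec_nonneg x

lemma psd_trace_nonneg {A : Matrix (Fin n) (Fin n) ℝ} (hA : A.PosSemidef) : 0 ≤ A.trace := by
  rw [Matrix.trace]
  apply Finset.sum_nonneg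
  intro i _
  have := form_of_psd hA (Pi.single i 1)
  simpa [dotProduct, mulVec, Pi.single_apply, Finset.sum_ite_eq] using this

open scoped MatrixOrder in
lemma trace_mul_nonneg {A B : Matrix (Fin n) (Fin n) ℝ} (hA : A.PosSemidef)
    (hB : B.PosSemidef) : 0 ≤ (A * B).trace := by
  have hs : ((CFC.sqrt A)).PosSemidef := (CFC.sqrt_nonneg A).posSemidef
  have h1 : A * B = (CFC.sqrt A) * (CFC.sqrt A) * B := by rw [CFC.sqrt_mul_sqrt_self A hA.nonneg]
  rw [h1]
  have h4 : ((CFC.sqrt A) * (CFC.sqrt A) * B).trace = ((CFC.sqrt A) * B * (CFC.sqrt A)).trace :=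
    (Matrix.trace_mul_cycle (CFC.sqrt A) B (CFC.sqrt A)).symm
  rw [h4]
  have h3 : ((CFC.sqrt A)ᴴ * B * (CFC.sqrt A)).PosSemidef := hB.conjTranspose_mul_mul_same (CFC.sqrt A)
  rw [hs.isHermitian] at h3
  exact psd_trace_nonneg h3

lemma conjT_eq_transpose (A : Matrix (Fin n) (Fin n) ℝ) : Aᴴ = Aᵀ := by simp

lemma inv_form_le {X Y : Matrix (Fin n) (Fin n) ℝ} (hX : X.PosDef) (hY : Y.PosDef)
    (hXY : (Y - X).PosSemidef) (z : Fin n → ℝ) :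
    z ⬝ᵥ (Y⁻¹ *ᵥ z) ≤ z ⬝ᵥ (X⁻¹ *ᵥ z) := by
  set u := Y⁻¹ *ᵥ z with hu
  set v := X⁻¹ *ᵥ z with hv
  have hXdet : IsUnit X.det := (Matrix.isUnit_iff_isUnit_det X).mp hX.isUnit
  have hYdet : IsUnit Y.det := (Matrix.isUnit_iff_isUnit_det Y).mp hY.isUnit
  have hXv : X *ᵥ v = z := by rw [hv, mulVec_mulVec, mul_nonsing_inv X hXdet, one_mulVec]
  have hYu : Y *ᵥ u = z := by rw [hu, mulVec_mulVec, mul_nonsing_inv Y hYdet, one_mulVec]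
  have hXsym : Xᵀ = X := by rw [← conjT_eq_transpose]; exact hX.1
  have h1 : u ⬝ᵥ (X *ᵥ u) ≤ u ⬝ᵥ z := by
    have h0 := form_of_psd hXY u
    rw [sub_mulVec, dotProduct_sub, hYu] at h0
    linarith
  have hvXu : v ⬝ᵥ (X *ᵥ u) = u ⬝ᵥ z := by
    rw [Matrix.dotProduct_mulVec]
    have : v ᵥ* X = X *ᵥ v := by rw [← hXsym, vecMul_transpose, hXsym]
    rw [this, hXv, dotProduct_comm]
  have h2 : 0 ≤ u ⬝ᵥ (X *ᵥ u) - 2 * (u ⬝ᵥ z) + z ⬝ᵥ v := by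
    have h0 := form_of_psd hX.posSemidef (u - v)
    rw [Matrix.mulVec_sub, sub_dotProduct, dotProduct_sub, dotProduct_sub, hXv, hvXu] at h0
    have huv : u ⬝ᵥ z - (u ⬝ᵥ z - v ⬝ᵥ z) = v ⬝ᵥ z := by ring
    have hvz : v ⬝ᵥ z = z ⬝ᵥ v := dotProduct_comm v z
    linarith [h0]
  have h3 : z ⬝ᵥ u = u ⬝ᵥ z := dotProduct_comm z u
  linarith

lemma inv_sub_psd {X Y : Matrix (Fin n) (Fin n) ℝ} (hX : X.PosDef) (hY : Y.PosDef)
    (hXY : (Y - X).PosSemidef) : (X⁻¹ - Y⁻¹).PosSemidef := by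
  refine psd_of_form ((hX.1.inv).sub (hY.1.inv)) fun z => ?_
  rw [sub_mulVec, dotProduct_sub, sub_nonneg]
  exact inv_form_le hX hY hXY z


/-- Proposition 2: robustness to a subset of the adversary's sensors. -/
theorem stmt_4 {n p phat : ℕ} (hpp : phat ≤ p)
    (M : Matrix (Fin n) (Fin n) ℝ) (hM : IsHurwitz M)
    (C : Matrix (Fin p) (Fin n) ℝ)
    (V : Matrix (Fin n) (Fin n) ℝ) (hV : V.PosDef)
    (S : Matrix (Fin phat) (Fin p) ℝ)
    (g : Fin phat → Fin p) (hg : Function.Injective g)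
    (hS : S = Matrix.of fun i j => if g i = j then (1 : ℝ) else 0)
    (Chat : Matrix (Fin phat) (Fin n) ℝ) (hChat : Chat = S * C)
    (WC WChat : Matrix (Fin n) (Fin n) ℝ)
    (hWC : Mᵀ * WC + WC * M + Cᵀ * C = 0)
    (hWChat : Mᵀ * WChat + WChat * M + Chatᵀ * Chat = 0) :
    (WC - WChat).PosSemidef ∧ (WChat * V).trace ≤ (WC * V).trace ∧
      (WChat.PosDef → WC.PosDef ∧ (WChat⁻¹ * V⁻¹).trace ≥ (WC⁻¹ * V⁻¹).trace) := by
  rcases Nat.eq_zero_or_pos n with rfl | hn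
  · have hall : ∀ A B : Matrix (Fin 0) (Fin 0) ℝ, A = B := fun A B => by
      ext i j; exact i.elim0
    have hWeq : WC = WChat := hall _ _
    refine ⟨?_, le_of_eq (by rw [hWeq]), fun h => ⟨by rwa [hWeq], le_of_eq (by rw [hWeq])⟩⟩
    have : WC - WChat = 0 := by rw [hWeq, sub_self]
    rw [this]
    exact psd_of_form isHermitian_zero (fun x => by simp)
  · set D := WC - WChat with hD
    set Q := Cᵀ * C - Chatᵀ * Chat with hQ
    have h1 : Mᵀ * WC + WC * M = -(Cᵀ * C) := add_eq_zero_iff_eq_neg.mp hWC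
    have h2 : Mᵀ * WChat + WChat * M = -(Chatᵀ * Chat) := add_eq_zero_iff_eq_neg.mp hWChat
    have heq : Mᵀ * D + D * M = -Q := by
      have hexp : Mᵀ * D + D * M
          = (Mᵀ * WC + WC * M) - (Mᵀ * WChat + WChat * M) := by
        rw [hD]; noncomm_ring
      rw [hexp, h1, h2, hQ]; noncomm_ring
    have hQform : ∀ z : Fin n → ℝ, 0 ≤ z ⬝ᵥ (Q *ᵥ z) := by
      intro z
      set w := C *ᵥ z with hw
      have hCz : z ⬝ᵥ ((Cᵀ * C) *ᵥ z) = w ⬝ᵥ w := by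
        rw [← mulVec_mulVec, Matrix.dotProduct_mulVec, vecMul_transpose]
      have hChatz : Chat *ᵥ z = S *ᵥ w := by rw [hChat, ← mulVec_mulVec]
      have hSw : ∀ i, (S *ᵥ w) i = w (g i) := by
        intro i
        simp [hS, mulVec, dotProduct, ite_mul, one_mul, zero_mul, Finset.sum_ite_eq]
      have hChatform : z ⬝ᵥ ((Chatᵀ * Chat) *ᵥ z) = ∑ i, w (g i) * w (g i) := by
        rw [← mulVec_mulVec, Matrix.dotProduct_mulVec, vecMul_transpose, hChatz]
        simp only [dotProduct, hSw]
      have hle : ∑ i, w (g i) * w (g i) ≤ w ⬝ᵥ w := by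
        have himg : ∑ j ∈ Finset.univ.image g, w j * w j = ∑ i, w (g i) * w (g i) :=
          Finset.sum_image (fun a _ b _ hab => hg hab)
        rw [← himg, dotProduct]
        exact Finset.sum_le_sum_of_subset_of_nonneg (Finset.subset_univ _)
          (fun j _ _ => mul_self_nonneg _)
      rw [hQ, sub_mulVec, dotProduct_sub, sub_nonneg, hCz, hChatform]
      exact hle
    have hQsymm : Qᵀ = Q := by
      rw [hQ, transpose_sub, transpose_mul, transpose_mul, transpose_transpose,
        transpose_transpose]
    have hDsym : Dᵀ = D := by
      have h3 : Mᵀ * Dᵀ + Dᵀ * M = -Q := by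
        have := congrArg Matrix.transpose heq
        rw [transpose_add, transpose_mul, transpose_mul, transpose_transpose,
          transpose_neg, hQsymm] at this
        rw [add_comm] at this
        exact this
      have hE : Mᵀ * (D - Dᵀ) + (D - Dᵀ) * M = 0 := by
        have hexp : Mᵀ * (D - Dᵀ) + (D - Dᵀ) * M
            = (Mᵀ * D + D * M) - (Mᵀ * Dᵀ + Dᵀ * M) := by noncomm_ring
        rw [hexp, heq, h3, sub_self]
      have := lyap_unique hn hM hE
      rw [sub_eq_zero] at this
      exact this.symm
    have hDpsd : D.PosSemidef := by
      refine psd_of_form ?_ (fun x => lyap_nonneg hn hM hQform heq x)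
      show Dᴴ = D
      rw [conjT_eq_transpose]
      exact hDsym
    have hVpsd : V.PosSemidef := hV.posSemidef
    have htr : (WChat * V).trace ≤ (WC * V).trace := by
      have h0 : 0 ≤ (D * V).trace := trace_mul_nonneg hDpsd hVpsd
      have : D * V = WC * V - WChat * V := by rw [hD, sub_mul]
      rw [this, trace_sub] at h0
      linarith
    refine ⟨hDpsd, htr, fun hWChatPD => ?_⟩
    have hWCpd : WC.PosDef := by
      have : WC = WChat + D := by rw [hD]; abel
      rw [this]
      exact hWChatPD.add_posSemidef hDpsd
    have hinv : (WChat⁻¹ - WC⁻¹).PosSemidef := inv_sub_psd hWChatPD hWCpd hDpsd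
    have hVinv : V⁻¹.PosSemidef := hV.inv.posSemidef
    have h0 : 0 ≤ ((WChat⁻¹ - WC⁻¹) * V⁻¹).trace := trace_mul_nonneg hinv hVinv
    have hsplit : (WChat⁻¹ - WC⁻¹) * V⁻¹ = WChat⁻¹ * V⁻¹ - WC⁻¹ * V⁻¹ := sub_mul _ _ _
    rw [hsplit, trace_sub] at h0
    constructor
    · exact hWCpd
    · linarith
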